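/- Let a ≤ c and b > 0 be nonnegative reals with a > 0. In each of the three model cases κ ∈ {-1, 0, 1} (with a, b, c ≤ π/2 when κ = 1), the comparison angle θ at the vertex between the sides of lengths a and b (opposite side c) satisfies cos θ ≤ tn_κ(b/2)/tn_κ(a), where tn_κ(t) = tanh t for κ = -1, t for κ = 0, and tan t for κ = 1. -/

import Mathlib

open Real

theorem comparison_angle_cos_bound (a b c : ℝ) (ha : 0 < a) (hac : a ≤ c)
    (hb : 0 < b) :
    ((a ^ 2 + b ^ 2 - c ^ 2) / (2 * a * b) ≤ (b / 2) / a) ∧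
    ((Real.cosh a * Real.cosh b - Real.cosh c) / (Real.sinh a * Real.sinh b) ≤
      Real.tanh (b / 2) / Real.tanh a) ∧
    (a ≤ π / 2 → b ≤ π / 2 → c ≤ π / 2 →
      (Real.cos c - Real.cos a * Real.cos b) / (Real.sin a * Real.sin b) ≤
        Real.tan (b / 2) / Real.tan a) := by
  refine ⟨?_, ?_, ?_⟩
  · have h1 : a ^ 2 ≤ c ^ 2 := by nlinarith
    have h2 : (0:ℝ) < 2 * a * b := by positivity
    calc (a ^ 2 + b ^ 2 - c ^ 2) / (2 * a * b) ≤ b ^ 2 / (2 * a * b) := by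
          gcongr; linarith
      _ = (b / 2) / a := by field_simp
  · have hca : Real.cosh a ≤ Real.cosh c := by
      have := Real.cosh_lt_cosh (x := a) (y := c)
      rcases eq_or_lt_of_le hac with h | h
      · simp [h]
      · exact le_of_lt (this.mpr (by rw [abs_of_pos ha, abs_of_pos (ha.trans_le hac)]; exact h))
    have hsa : 0 < Real.sinh a := Real.sinh_pos_iff.mpr ha
    have hsb : 0 < Real.sinh b := Real.sinh_pos_iff.mpr hb
    have hsb2 : 0 < Real.sinh (b / 2) := Real.sinh_pos_iff.mpr (by linarith)
    have hch2 : 0 < Real.cosh (b / 2) := Real.cosh_pos _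
    have hcha : 0 < Real.cosh a := Real.cosh_pos _
    have hcoshb : Real.cosh b = 2 * Real.sinh (b / 2) ^ 2 + 1 := by
      have : Real.cosh b = Real.cosh (2 * (b / 2)) := by ring_nf
      rw [this, Real.cosh_two_mul]
      have := Real.cosh_sq (b / 2)
      nlinarith
    have hsinhb : Real.sinh b = 2 * Real.sinh (b / 2) * Real.cosh (b / 2) := by
      have : Real.sinh b = Real.sinh (2 * (b / 2)) := by ring_nf
      rw [this, Real.sinh_two_mul]
    rw [Real.tanh_eq_sinh_div_cosh, Real.tanh_eq_sinh_div_cosh]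
    rw [div_div_div_eq]
    calc (Real.cosh a * Real.cosh b - Real.cosh c) / (Real.sinh a * Real.sinh b)
        ≤ (Real.cosh a * Real.cosh b - Real.cosh a) / (Real.sinh a * Real.sinh b) := by
          gcongr
      _ = Real.sinh (b / 2) * Real.cosh a / (Real.cosh (b / 2) * Real.sinh a) := by
          rw [hcoshb, hsinhb]; field_simp; ring
  · intro hA hB hC
    have hpi := Real.pi_pos
    have hsa : 0 < Real.sin a := Real.sin_pos_of_pos_of_lt_pi ha (by linarith)
    have hsb : 0 < Real.sin b := Real.sin_pos_of_pos_of_lt_pi hb (by linarith)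
    have hca : 0 ≤ Real.cos a := Real.cos_nonneg_of_mem_Icc ⟨by linarith, hA⟩
    have hcc : Real.cos c ≤ Real.cos a :=
      Real.cos_le_cos_of_nonneg_of_le_pi (le_of_lt ha) (by linarith) hac
    have hsb2 : 0 < Real.sin (b / 2) :=
      Real.sin_pos_of_pos_of_lt_pi (by linarith) (by linarith)
    have hcb2 : 0 < Real.cos (b / 2) :=
      Real.cos_pos_of_mem_Ioo ⟨by linarith, by linarith⟩
    have hcosb : Real.cos b = 1 - 2 * Real.sin (b / 2) ^ 2 := by
      have : Real.cos b = Real.cos (2 * (b / 2)) := by ring_nf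
      rw [this, Real.cos_two_mul]
      have := Real.sin_sq_add_cos_sq (b / 2)
      nlinarith
    have hsinb : Real.sin b = 2 * Real.sin (b / 2) * Real.cos (b / 2) := by
      have : Real.sin b = Real.sin (2 * (b / 2)) := by ring_nf
      rw [this, Real.sin_two_mul]
    rw [Real.tan_eq_sin_div_cos, Real.tan_eq_sin_div_cos]
    rw [div_div_div_eq]
    calc (Real.cos c - Real.cos a * Real.cos b) / (Real.sin a * Real.sin b)
        ≤ (Real.cos a - Real.cos a * Real.cos b) / (Real.sin a * Real.sin b) := by
          gcongr
      _ = Real.sin (b / 2) * Real.cos a / (Real.cos (b / 2) * Real.sin a) := by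
          rw [hcosb, hsinb]; field_simp; ring
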